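/- Let A : [n]^k → [N] be a function and S ⊆ [n]^k. Then D_k(A,S) ≤ (k−1)·2^{N_k(A,S)} + N_k(A,S). -/

import Mathlib

/-- Transcript of `c` bits, each bit determined from the previous transcript. -/
def buildTranscript (step : List Bool → Bool) : ℕ → List Bool
  | 0 => []
  | m + 1 => buildTranscript step m ++ [step (buildTranscript step m)]

/-- A deterministic number-on-the-forehead style protocol with `k` players on input
space `I`, where `Vis i x x'` means player `i` cannot distinguish the inputs `x` and
`x'` (player `i` sees everything except their own input).  The protocol runs for
exactly `c` rounds; in each round a speaker, determined by the transcript so far,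
writes one bit on the blackboard, and this bit may depend only on the part of the
input that the speaker sees.  The output is determined by the full transcript. -/
structure DProt (k : ℕ) (I : Type) (Vis : Fin k → I → I → Prop) (Y : Type) (c : ℕ) where
  speaker : List Bool → Fin k
  msg : List Bool → I → Bool
  msg_nof : ∀ t x x', Vis (speaker t) x x' → msg t x = msg t x'
  out : List Bool → Y

def DProt.run {k I Vis Y c} (P : DProt k I Vis Y c) (x : I) : Y :=
  P.out (buildTranscript (fun t => P.msg t x) c)

/-- Deterministic NOF communication complexity of `f` restricted to `S`. -/
noncomputable def DCC {k : ℕ} {I Y : Type} (Vis : Fin k → I → I → Prop)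
    (f : I → Y) (S : Set I) : ℕ :=
  sInf { c | ∃ P : DProt k I Vis Y c, ∀ x ∈ S, P.run x = f x }

/-- A nondeterministic protocol: a prover first provides a proof string of `a` bits,
after which the players communicate `c` bits as in a deterministic protocol (the bits
may depend on the proof). -/
structure NProt (k : ℕ) (I : Type) (Vis : Fin k → I → I → Prop) (Y : Type) (a c : ℕ) where
  speaker : (Fin a → Bool) → List Bool → Fin k
  msg : (Fin a → Bool) → List Bool → I → Bool
  msg_nof : ∀ p t x x', Vis (speaker p t) x x' → msg p t x = msg p t x'
  out : (Fin a → Bool) → List Bool → Y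

def NProt.run {k I Vis Y a c} (P : NProt k I Vis Y a c) (p : Fin a → Bool) (x : I) : Y :=
  P.out p (buildTranscript (fun t => P.msg p t x) c)

/-- Nondeterministic NOF complexity `N_k(A, S)` of the search problem for `A : I → Y`
restricted to `S`: minimum cost (proof length plus communication) of a protocol which
on every input outputs either a value in `Y` or `none` (i.e. "don't know"), never
outputs a wrong value on inputs in `S`, and on every input of `S` has at least one
proof leading to the correct value. -/
noncomputable def NCC {k : ℕ} {I Y : Type} (Vis : Fin k → I → I → Prop)
    (A : I → Y) (S : Set I) : ℕ :=
  sInf { m | ∃ a c, m = a + c ∧ ∃ P : NProt k I Vis (Option Y) a c,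
    ∀ x ∈ S, (∀ p, P.run p x = none ∨ P.run p x = some (A x)) ∧
      ∃ p, P.run p x = some (A x) }

/-- Nondeterministic NOF complexity `N¹_k(f)` of a boolean function `f`: on every
1-input some proof leads to output `true`, and on every 0-input all proofs lead to
output `false`.  The cost is proof length plus communication. -/
noncomputable def NCCbool {k : ℕ} {I : Type} (Vis : Fin k → I → I → Prop)
    (f : I → Bool) : ℕ :=
  sInf { m | ∃ a c, m = a + c ∧ ∃ P : NProt k I Vis Bool a c,
    ∀ x, f x = true ↔ ∃ p, P.run p x = true }

/-- Deterministic NOF communication complexity with `b` help bits: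
`min` over `t ≤ b` and partitions of the input space into `2 ^ t` parts (given by a
coloring `H`) of `t` plus the maximal complexity of a part. -/
noncomputable def DHelp {k : ℕ} {I Y : Type} (Vis : Fin k → I → I → Prop)
    (A : I → Y) (b : ℕ) : ℕ :=
  sInf { m | ∃ t ≤ b, ∃ H : I → Fin (2 ^ t),
    m = t + Finset.univ.sup fun i => DCC Vis A (H ⁻¹' {i}) }

/-- Nondeterministic NOF communication complexity with `b` help bits. -/
noncomputable def NHelp {k : ℕ} {I Y : Type} (Vis : Fin k → I → I → Prop)
    (A : I → Y) (b : ℕ) : ℕ :=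
  sInf { m | ∃ t ≤ b, ∃ H : I → Fin (2 ^ t),
    m = t + Finset.univ.sup fun i => NCC Vis A (H ⁻¹' {i}) }

/-- A one-way protocol: player `last` first sends a message of `a` bits (depending
only on what they see), after which the remaining players communicate `c` more bits
without the participation of player `last`. -/
structure OWProt (k : ℕ) (I : Type) (Vis : Fin k → I → I → Prop) (Y : Type)
    (last : Fin k) (a c : ℕ) where
  pre : I → Fin a → Bool
  pre_nof : ∀ x x', Vis last x x' → pre x = pre x'
  speaker : (Fin a → Bool) → List Bool → Fin k
  speaker_ne : ∀ p t, speaker p t ≠ last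
  msg : (Fin a → Bool) → List Bool → I → Bool
  msg_nof : ∀ p t x x', Vis (speaker p t) x x' → msg p t x = msg p t x'
  out : (Fin a → Bool) → List Bool → Y

def OWProt.run {k I Vis Y last a c} (P : OWProt k I Vis Y last a c) (x : I) : Y :=
  P.out (P.pre x) (buildTranscript (fun t => P.msg (P.pre x) t x) c)

/-- One-way NOF communication complexity `D¹_k(f)`, where player `last` speaks first
(a single message) and then the other players communicate. -/
noncomputable def OWCC {k : ℕ} {I Y : Type} (Vis : Fin k → I → I → Prop)
    (f : I → Y) (last : Fin k) : ℕ :=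
  sInf { m | ∃ a c, m = a + c ∧ ∃ P : OWProt k I Vis Y last a c, ∀ x, P.run x = f x }

/-- Standard NOF visibility: player `i` sees all coordinates except the `i`-th one. -/
def nofVis (k : ℕ) (W : Type) : Fin k → (Fin k → W) → (Fin k → W) → Prop :=
  fun i x x' => ∀ j, j ≠ i → x j = x' j

/-- NOF visibility for `k` players on inputs in `(Fin (k-1) → W) × Z`: players
`0, …, k-2` hold the coordinates of the first component on their foreheads, and the
`k`-th player (index `k-1`) holds the second component. -/
def liftVis (k : ℕ) (W Z : Type) :
    Fin k → ((Fin (k - 1) → W) × Z) → ((Fin (k - 1) → W) × Z) → Prop :=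
  fun i z z' => (∀ j : Fin (k - 1), (j : ℕ) ≠ (i : ℕ) → z.1 j = z'.1 j) ∧
    ((i : ℕ) = k - 1 ∨ z.2 = z'.2)

/-- `C` is a cylinder in coordinate `i`: membership does not depend on coordinate `i`. -/
def IsCylinder (k : ℕ) (W : Type) (i : Fin k) (C : Set (Fin k → W)) : Prop :=
  ∀ x x', (∀ j, j ≠ i → x j = x' j) → (x ∈ C ↔ x' ∈ C)

/-- `C` is a cylinder intersection: an intersection of cylinders, one per coordinate. -/
def IsCylinderIntersection (k : ℕ) (W : Type) (C : Set (Fin k → W)) : Prop :=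
  ∃ Cs : Fin k → Set (Fin k → W), (∀ i, IsCylinder k W i (Cs i)) ∧ C = ⋂ i, Cs i

/-- `disc(A, S, y) = | |A⁻¹(y) ∩ S| - |S| / N | / |X|` where `N` is the number of
colors and `X` is the input space. -/
noncomputable def discVal (k : ℕ) (W Y : Type) (A : (Fin k → W) → Y)
    (S : Set (Fin k → W)) (y : Y) : ℝ :=
  |(Nat.card ↥(A ⁻¹' {y} ∩ S) : ℝ) - (Nat.card ↥S : ℝ) / (Nat.card Y : ℝ)| /
    (Nat.card (Fin k → W) : ℝ)

/-- Multicolor discrepancy of `A`: the supremum of `disc(A, S, y)` over all cylinder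
intersections `S` and all colors `y`. -/
noncomputable def multiDisc (k : ℕ) (W Y : Type) (A : (Fin k → W) → Y) : ℝ :=
  sSup { d : ℝ | ∃ S y, IsCylinderIntersection k W S ∧ d = discVal k W Y A S y }

lemma bt_length (step : List Bool → Bool) : ∀ m, (buildTranscript step m).length = m
  | 0 => rfl
  | m + 1 => by simp [buildTranscript, bt_length step m]

lemma bt_take (step : List Bool → Bool) {j : ℕ} : ∀ {m}, j ≤ m →
    (buildTranscript step m).take j = buildTranscript step j
  | 0, h => by simp_all [buildTranscript]
  | m + 1, h => by
    rcases eq_or_lt_of_le h with rfl | h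
    · exact List.take_of_length_le (by rw [bt_length])
    · rw [buildTranscript, List.take_append_of_le_length (by rw [bt_length]; omega),
        bt_take step (by omega)]

lemma bt_getD (step : List Bool → Bool) {j : ℕ} : ∀ {m}, j < m →
    (buildTranscript step m).getD j false = step (buildTranscript step j)
  | m + 1, h => by
    rcases eq_or_lt_of_le (Nat.lt_succ_iff.1 h) with rfl | h
    · rw [buildTranscript]
      rw [List.getD_eq_getElem?_getD, List.getElem?_append_right (by rw [bt_length])]
      simp [bt_length]
    · rw [buildTranscript, List.getD_eq_getElem?_getD, List.getElem?_append,
        if_pos (by rw [bt_length]; omega), ← List.getD_eq_getElem?_getD, bt_getD step h]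

lemma ofFn_take_bt (step : List Bool → Bool) {c : ℕ} (τ : Fin c → Bool)
    (hc : ∀ j : Fin c, (List.ofFn τ).take j = buildTranscript step j →
      τ j = step (buildTranscript step j)) :
    ∀ j, j ≤ c → (List.ofFn τ).take j = buildTranscript step j := by
  intro j hj
  induction j with
  | zero => simp [buildTranscript]
  | succ j ih =>
    have hj' : j < c := by omega
    have ihj := ih (by omega)
    rw [List.take_succ, ihj, List.getElem?_ofFn]
    simp only [List.ofFnNthVal, hj', dif_pos]
    rw [show buildTranscript step (j+1) = buildTranscript step j ++ [step (buildTranscript step j)] from rfl,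
      ← hc ⟨j, hj'⟩ (by simpa using ihj)]
    rfl

lemma ofFn_eq_bt (step : List Bool → Bool) {c : ℕ} (τ : Fin c → Bool)
    (hc : ∀ j : Fin c, (List.ofFn τ).take j = buildTranscript step j →
      τ j = step (buildTranscript step j)) :
    List.ofFn τ = buildTranscript step c := by
  have := ofFn_take_bt step τ hc c le_rfl
  rwa [List.take_of_length_le (by simp)] at this

section Main
variable {k : ℕ} {I Y : Type} {Vis : Fin k → I → I → Prop} {a c : ℕ}

def Eenc (a c : ℕ) : ((Fin a → Bool) × (Fin c → Bool)) ≃ (Fin (a+c) → Bool) :=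
  (Equiv.sumArrowEquivProdArrow (Fin a) (Fin c) Bool).symm.trans
    (Equiv.arrowCongr finSumFinEquiv (Equiv.refl Bool))

noncomputable def Denc (a c : ℕ) : ((Fin a → Bool) × (Fin c → Bool)) ≃ Fin (2^(a+c)) :=
  Fintype.equivFinOfCardEq (by simp [Fintype.card_fun, pow_add])

def checkB (P : NProt k I Vis (Option Y) a c) (i : Fin k)
    (s : (Fin a → Bool) × (Fin c → Bool)) (x : I) : Prop :=
  ∀ j : Fin c, P.speaker s.1 ((List.ofFn s.2).take j) = i →
    s.2 j = P.msg s.1 ((List.ofFn s.2).take j) x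

instance (P : NProt k I Vis (Option Y) a c) (i : Fin k)
    (s : (Fin a → Bool) × (Fin c → Bool)) (x : I) : Decidable (checkB P i s x) := by
  unfold checkB; infer_instance

lemma checkB_iff (P : NProt k I Vis (Option Y) a c) (i : Fin k)
    (s : (Fin a → Bool) × (Fin c → Bool)) {x x' : I} (h : Vis i x x') :
    checkB P i s x ↔ checkB P i s x' := by
  constructor <;> intro hch j hsp <;> rw [hch j hsp]
  · exact P.msg_nof s.1 _ x x' (hsp ▸ h)
  · exact (P.msg_nof s.1 _ x x' (hsp ▸ h)).symm

def good (P : NProt k I Vis (Option Y) a c) (last : Fin k) (t : List Bool) (x : I)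
    (s : (Fin a → Bool) × (Fin c → Bool)) : Prop :=
  (∀ i : Fin k, (i : ℕ) < k - 1 →
    t.getD ((i : ℕ) * 2^(a+c) + (Denc a c s : ℕ)) false = true) ∧
  checkB P last s x ∧ (P.out s.1 (List.ofFn s.2)).isSome

noncomputable def choice (P : NProt k I Vis (Option Y) a c) (last : Fin k)
    (t : List Bool) (x : I) : (Fin a → Bool) × (Fin c → Bool) :=
  letI := Classical.propDecidable (∃ s, good P last t x s)
  if h : ∃ s, good P last t x s then h.choose else (fun _ => false, fun _ => false)

lemma choice_congr (P : NProt k I Vis (Option Y) a c) (last : Fin k) (t : List Bool)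
    {x x' : I} (h : Vis last x x') : choice P last t x = choice P last t x' := by
  have hg : good P last t x = good P last t x' := by
    funext s
    exact propext (and_congr_right fun _ => and_congr_left fun _ => checkB_iff P last s h)
  unfold choice
  rw [hg]

lemma choice_spec (P : NProt k I Vis (Option Y) a c) (last : Fin k) (t : List Bool)
    (x : I) (h : ∃ s, good P last t x s) : good P last t x (choice P last t x) := by
  unfold choice
  rw [dif_pos h]
  exact h.choose_spec

lemma two_pow_pos' (m : ℕ) : 0 < 2 ^ m := by positivity

/-- The deterministic simulation of a nondeterministic protocol. -/
noncomputable def detP (hk : 0 < k) (y₀ : Y) (P : NProt k I Vis (Option Y) a c) :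
    DProt k I Vis Y ((k - 1) * 2 ^ (a + c) + (a + c)) where
  speaker t :=
    if h : t.length < (k - 1) * 2 ^ (a + c) then
      ⟨t.length / 2 ^ (a + c),
        lt_of_lt_of_le ((Nat.div_lt_iff_lt_mul (two_pow_pos' _)).2 h) (Nat.sub_le k 1)⟩
    else ⟨k - 1, Nat.sub_lt hk one_pos⟩
  msg t x :=
    if h : t.length < (k - 1) * 2 ^ (a + c) then
      decide (checkB P
        ⟨t.length / 2 ^ (a + c),
          lt_of_lt_of_le ((Nat.div_lt_iff_lt_mul (two_pow_pos' _)).2 h) (Nat.sub_le k 1)⟩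
        ((Denc a c).symm ⟨t.length % 2 ^ (a + c), Nat.mod_lt _ (two_pow_pos' _)⟩) x)
    else if h2 : t.length - (k - 1) * 2 ^ (a + c) < a + c then
      Eenc a c (choice P ⟨k - 1, Nat.sub_lt hk one_pos⟩
        (t.take ((k - 1) * 2 ^ (a + c))) x) ⟨_, h2⟩
    else false
  msg_nof := by
    intro t x x' hvis
    by_cases h : t.length < (k - 1) * 2 ^ (a + c)
    · simp only [dif_pos h] at hvis ⊢
      congr 1
      exact propext (checkB_iff P _ _ hvis)
    · simp only [dif_neg h] at hvis ⊢
      by_cases h2 : t.length - (k - 1) * 2 ^ (a + c) < a + c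
      · simp only [dif_pos h2]
        rw [choice_congr P _ _ hvis]
      · simp only [dif_neg h2]
  out t :=
    let σ := (Eenc a c).symm (fun j => t.getD ((k - 1) * 2 ^ (a + c) + j) false)
    (P.out σ.1 (List.ofFn σ.2)).getD y₀

lemma detP_msg_lo (hk : 0 < k) (y₀ : Y) (P : NProt k I Vis (Option Y) a c)
    (t : List Bool) (x : I) (h : t.length < (k - 1) * 2 ^ (a + c))
    (i : Fin k) (s : (Fin a → Bool) × (Fin c → Bool))
    (hi : (i : ℕ) = t.length / 2 ^ (a + c))
    (hs : (Denc a c s : ℕ) = t.length % 2 ^ (a + c)) :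
    (detP hk y₀ P).msg t x = decide (checkB P i s x) := by
  have hieq : (⟨t.length / 2 ^ (a + c),
      lt_of_lt_of_le ((Nat.div_lt_iff_lt_mul (two_pow_pos' _)).2 h) (Nat.sub_le k 1)⟩ : Fin k)
      = i := Fin.ext hi.symm
  have hseq : ((Denc a c).symm ⟨t.length % 2 ^ (a + c), Nat.mod_lt _ (two_pow_pos' _)⟩) = s := by
    have heq : (⟨t.length % 2 ^ (a + c), Nat.mod_lt _ (two_pow_pos' _)⟩ : Fin (2^(a+c)))
        = Denc a c s := Fin.ext hs.symm
    rw [heq]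
    exact Equiv.symm_apply_apply _ _
  show dite _ _ _ = _
  rw [dif_pos h, hieq, hseq]

lemma detP_msg_hi (hk : 0 < k) (y₀ : Y) (P : NProt k I Vis (Option Y) a c)
    (t : List Bool) (x : I) (h : ¬ t.length < (k - 1) * 2 ^ (a + c))
    (h2 : t.length - (k - 1) * 2 ^ (a + c) < a + c) (jj : Fin (a + c))
    (hjj : (jj : ℕ) = t.length - (k - 1) * 2 ^ (a + c)) :
    (detP hk y₀ P).msg t x =
      Eenc a c (choice P ⟨k - 1, Nat.sub_lt hk one_pos⟩
        (t.take ((k - 1) * 2 ^ (a + c))) x) jj := by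
  have hje : (⟨t.length - (k - 1) * 2 ^ (a + c), h2⟩ : Fin (a + c)) = jj := Fin.ext hjj.symm
  show dite _ _ _ = _
  rw [dif_neg h, dif_pos h2, hje]

lemma detP_out (hk : 0 < k) (y₀ : Y) (P : NProt k I Vis (Option Y) a c) (t : List Bool) :
    (detP hk y₀ P).out t =
      ((P.out ((Eenc a c).symm (fun j => t.getD ((k - 1) * 2 ^ (a + c) + j) false)).1
        (List.ofFn ((Eenc a c).symm
          (fun j => t.getD ((k - 1) * 2 ^ (a + c) + j) false)).2)).getD y₀) := rfl

end Main
section Main2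
variable {k : ℕ} {I Y : Type} {Vis : Fin k → I → I → Prop} {a c : ℕ}

lemma arith_div_mod (i u m : ℕ) (hu : u < 2 ^ m) :
    (i * 2 ^ m + u) / 2 ^ m = i ∧ (i * 2 ^ m + u) % 2 ^ m = u := by
  constructor
  · rw [add_comm, Nat.add_mul_div_right _ _ (two_pow_pos' m), Nat.div_eq_of_lt hu, zero_add]
  · rw [add_comm, Nat.add_mul_mod_self_right, Nat.mod_eq_of_lt hu]

lemma detP_correct (hk : 0 < k) (y₀ : Y) (P : NProt k I Vis (Option Y) a c)
    (A : I → Y) (S : Set I)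
    (hP : ∀ x ∈ S, (∀ p, P.run p x = none ∨ P.run p x = some (A x)) ∧
      ∃ p, P.run p x = some (A x)) :
    ∀ x ∈ S, (detP hk y₀ P).run x = A x := by
  intro x hx
  obtain ⟨hsound, p₀, hp₀⟩ := hP x hx
  let last : Fin k := ⟨k - 1, Nat.sub_lt hk one_pos⟩
  let step : List Bool → Bool := fun t => (detP hk y₀ P).msg t x
  have hKle : ∀ i : Fin k, (i : ℕ) < k - 1 →
      ∀ s : (Fin a → Bool) × (Fin c → Bool),
      (i : ℕ) * 2 ^ (a + c) + (Denc a c s : ℕ) < (k - 1) * 2 ^ (a + c) := by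
    intro i hi s
    have hd : (Denc a c s : ℕ) < 2 ^ (a + c) := (Denc a c s).2
    calc (i : ℕ) * 2 ^ (a + c) + (Denc a c s : ℕ)
        < ((i : ℕ) + 1) * 2 ^ (a + c) := by rw [add_mul, one_mul]; omega
      _ ≤ (k - 1) * 2 ^ (a + c) := Nat.mul_le_mul_right _ (by omega)
  -- value of phase-1 bits
  have hstepbit : ∀ (i : Fin k), (i : ℕ) < k - 1 →
      ∀ s : (Fin a → Bool) × (Fin c → Bool),
      step (buildTranscript step ((i : ℕ) * 2 ^ (a + c) + (Denc a c s : ℕ)))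
        = decide (checkB P i s x) := by
    intro i hi s
    have hr := hKle i hi s
    have harith := arith_div_mod (i : ℕ) (Denc a c s : ℕ) (a + c) (Denc a c s).2
    exact detP_msg_lo hk y₀ P _ x (by rw [bt_length]; exact hr) i s
      (by rw [bt_length]; exact harith.1.symm) (by rw [bt_length]; exact harith.2.symm)
  -- the honest witness
  let pstep : List Bool → Bool := fun t => P.msg p₀ t x
  let τ : Fin c → Bool := fun j => pstep (buildTranscript pstep j)
  have hofn : List.ofFn τ = buildTranscript pstep c := ofFn_eq_bt pstep τ (fun j hj => rfl)
  have htake : ∀ j : Fin c, (List.ofFn τ).take (j : ℕ) = buildTranscript pstep (j : ℕ) :=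
    fun j => ofFn_take_bt pstep τ (fun j hj => rfl) j j.2.le
  have hcheckstar : ∀ i : Fin k, checkB P i (p₀, τ) x := by
    intro i j hsp
    show τ j = P.msg p₀ ((List.ofFn τ).take (j : ℕ)) x
    rw [htake j]
  have hex : ∃ s, good P last (buildTranscript step ((k - 1) * 2 ^ (a + c))) x s := by
    refine ⟨(p₀, τ), ?_, hcheckstar last, ?_⟩
    · intro i hi
      rw [bt_getD step (hKle i hi (p₀, τ)), hstepbit i hi (p₀, τ)]
      exact decide_eq_true (hcheckstar i)
    · show (P.out p₀ (List.ofFn τ)).isSome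
      rw [hofn]
      show (P.run p₀ x).isSome
      rw [hp₀]
      rfl
  have hgood := choice_spec P last _ x hex
  set σ := choice P last (buildTranscript step ((k - 1) * 2 ^ (a + c))) x with hσ
  -- full consistency of the chosen string
  have hcons : ∀ j : Fin c, σ.2 j = P.msg σ.1 ((List.ofFn σ.2).take (j : ℕ)) x := by
    intro j
    by_cases hilt : (P.speaker σ.1 ((List.ofFn σ.2).take (j : ℕ)) : ℕ) < k - 1
    · set i := P.speaker σ.1 ((List.ofFn σ.2).take (j : ℕ)) with hi
      have h1 := hgood.1 i hilt
      rw [bt_getD step (hKle i hilt σ), hstepbit i hilt σ] at h1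
      exact (of_decide_eq_true h1) j rfl
    · have hieq : P.speaker σ.1 ((List.ofFn σ.2).take (j : ℕ)) = last := by
        have h2 := (P.speaker σ.1 ((List.ofFn σ.2).take (j : ℕ))).2
        refine Fin.ext ?_
        show _ = k - 1
        omega
      exact hgood.2.1 j hieq
  have hofnσ : List.ofFn σ.2 = buildTranscript (fun u => P.msg σ.1 u x) c :=
    ofFn_eq_bt _ _ (fun j hj => by rw [← hj]; exact hcons j)
  -- phase-2 bits
  have hbit2 : ∀ j : Fin (a + c),
      (buildTranscript step ((k - 1) * 2 ^ (a + c) + (a + c))).getD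
        ((k - 1) * 2 ^ (a + c) + (j : ℕ)) false = Eenc a c σ j := by
    intro j
    rw [bt_getD step (by have := j.2; omega)]
    rw [show step (buildTranscript step ((k - 1) * 2 ^ (a + c) + (j : ℕ)))
        = (detP hk y₀ P).msg (buildTranscript step ((k - 1) * 2 ^ (a + c) + (j : ℕ))) x from rfl]
    rw [detP_msg_hi hk y₀ P _ x (by rw [bt_length]; omega)
      (by rw [bt_length]; have := j.2; omega) j (by rw [bt_length]; omega)]
    rw [bt_take step (Nat.le_add_right _ _)]
  -- conclude
  show (detP hk y₀ P).out
      (buildTranscript step ((k - 1) * 2 ^ (a + c) + (a + c))) = A x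
  rw [detP_out]
  have hfun : (fun j : Fin (a + c) =>
      (buildTranscript step ((k - 1) * 2 ^ (a + c) + (a + c))).getD
        ((k - 1) * 2 ^ (a + c) + (j : ℕ)) false) = Eenc a c σ := funext fun j => hbit2 j
  rw [hfun, Equiv.symm_apply_apply]
  have hrun : P.out σ.1 (List.ofFn σ.2) = P.run σ.1 x := by rw [hofnσ]; rfl
  rcases hsound σ.1 with h | h
  · exfalso
    have h3 := hgood.2.2
    rw [hrun, h] at h3
    exact Bool.noConfusion h3
  · rw [hrun, h]
    rfl

end Main2

/-- Let `A : [n]^k → [N]` and `S ⊆ [n]^k`.  Then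
`D_k(A, S) ≤ (k - 1) · 2^{N_k(A,S)} + N_k(A,S)`. -/
theorem det_le_exp_nondet_partial (k n N : ℕ) (A : (Fin k → Fin n) → Fin N)
    (S : Set (Fin k → Fin n)) :
    DCC (nofVis k (Fin n)) A S ≤
      (k - 1) * 2 ^ NCC (nofVis k (Fin n)) A S + NCC (nofVis k (Fin n)) A S := by
  rcases Set.eq_empty_or_nonempty { m | ∃ a c, m = a + c ∧
      ∃ P : NProt k (Fin k → Fin n) (nofVis k (Fin n)) (Option (Fin N)) a c,
      ∀ x ∈ S, (∀ p, P.run p x = none ∨ P.run p x = some (A x)) ∧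
        ∃ p, P.run p x = some (A x) } with hN | hN
  · -- the nondeterministic set is empty, hence so is the deterministic one
    have hD : { c | ∃ P : DProt k (Fin k → Fin n) (nofVis k (Fin n)) (Fin N) c,
        ∀ x ∈ S, P.run x = A x } = ∅ := by
      rw [Set.eq_empty_iff_forall_notMem]
      rintro c' ⟨P', hP'⟩
      have hmem : (0 + c') ∈ { m | ∃ a c, m = a + c ∧
          ∃ P : NProt k (Fin k → Fin n) (nofVis k (Fin n)) (Option (Fin N)) a c,
          ∀ x ∈ S, (∀ p, P.run p x = none ∨ P.run p x = some (A x)) ∧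
            ∃ p, P.run p x = some (A x) } := by
        refine ⟨0, c', rfl, ⟨fun _ t => P'.speaker t, fun _ t x => P'.msg t x,
          fun p t => P'.msg_nof t, fun _ t => some (P'.out t)⟩, ?_⟩
        intro x hx
        refine ⟨fun p => Or.inr ?_, fun _ => false, ?_⟩ <;>
          exact congrArg some (hP' x hx)
      rw [hN] at hmem
      exact hmem
    show sInf _ ≤ _
    rw [hD, Nat.sInf_empty]
    exact Nat.zero_le _
  · have hm := Nat.sInf_mem hN
    obtain ⟨a, c, hm, P, hP⟩ := hm
    have hNCC : NCC (nofVis k (Fin n)) A S = a + c := hm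
    rcases Nat.eq_zero_or_pos k with rfl | hk
    · have hD : { c | ∃ P : DProt 0 (Fin 0 → Fin n) (nofVis 0 (Fin n)) (Fin N) c,
          ∀ x ∈ S, P.run x = A x } = ∅ := by
        rw [Set.eq_empty_iff_forall_notMem]
        rintro c' ⟨P', _⟩
        exact (P'.speaker []).elim0
      show sInf _ ≤ _
      rw [hD, Nat.sInf_empty]
      exact Nat.zero_le _
    rcases Nat.eq_zero_or_pos N with rfl | hNpos
    · have hD : { c | ∃ P : DProt k (Fin k → Fin n) (nofVis k (Fin n)) (Fin 0) c,
          ∀ x ∈ S, P.run x = A x } = ∅ := by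
        rw [Set.eq_empty_iff_forall_notMem]
        rintro c' ⟨P', _⟩
        exact (P'.out []).elim0
      show sInf _ ≤ _
      rw [hD, Nat.sInf_empty]
      exact Nat.zero_le _
    · have hcor := detP_correct hk ⟨0, hNpos⟩ P A S hP
      have hmem : ((k - 1) * 2 ^ (a + c) + (a + c)) ∈
          { c' | ∃ P' : DProt k (Fin k → Fin n) (nofVis k (Fin n)) (Fin N) c',
            ∀ x ∈ S, P'.run x = A x } := ⟨detP hk ⟨0, hNpos⟩ P, hcor⟩
      have hle := Nat.sInf_le hmem
      rw [hNCC]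
      exact hle
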